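/- For every continuous real-valued potential q on [0,1], the set of negative Dirichlet eigenvalues of q, i.e. {λ ∈ ℝ : λ < 0 and λ is a Dirichlet eigenvalue of q}, is finite. -/

import Mathlib

open Set MeasureTheory intervalIntegral

/-- `lam` is a Dirichlet eigenvalue of `q` on `[0,1]`: there is a nontrivial C²
solution of `-ψ'' + q ψ = lam ψ` with `ψ 0 = ψ 1 = 0`. -/
def IsDirichletEigenvalue (q : ℝ → ℝ) (lam : ℝ) : Prop :=
  ∃ ψ ψ' : ℝ → ℝ,
    (∀ x ∈ Set.Icc (0:ℝ) 1, HasDerivAt ψ (ψ' x) x) ∧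
    (∀ x ∈ Set.Icc (0:ℝ) 1, HasDerivAt ψ' (q x * ψ x - lam * ψ x) x) ∧
    (∃ x ∈ Set.Icc (0:ℝ) 1, ψ x ≠ 0) ∧ ψ 0 = 0 ∧ ψ 1 = 0

private lemma icc_cont {f f' : ℝ → ℝ} (h : ∀ x ∈ Icc (0:ℝ) 1, HasDerivAt f (f' x) x) :
    ContinuousOn f (Icc 0 1) := fun x hx => (h x hx).continuousAt.continuousWithinAt

private lemma icc_ii {g : ℝ → ℝ} (h : ContinuousOn g (Icc 0 1)) {a b : ℝ}
    (ha : a ∈ Icc (0:ℝ) 1) (hb : b ∈ Icc (0:ℝ) 1) :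
    IntervalIntegrable g volume a b := by
  apply ContinuousOn.intervalIntegrable
  apply h.mono
  rw [← uIcc_of_le (zero_le_one' ℝ), uIcc_subset_uIcc_iff_mem,
    uIcc_of_le (zero_le_one' ℝ)]
  exact ⟨ha, hb⟩

private lemma h0I : (0:ℝ) ∈ Icc (0:ℝ) 1 := ⟨le_refl _, zero_le_one⟩
private lemma h1I : (1:ℝ) ∈ Icc (0:ℝ) 1 := ⟨zero_le_one, le_refl _⟩

private lemma sq_integral_pos {ψ : ℝ → ℝ} (hc : ContinuousOn ψ (Icc 0 1))
    (hx0 : ∃ x ∈ Icc (0:ℝ) 1, ψ x ≠ 0) (h0 : ψ 0 = 0) (h1 : ψ 1 = 0) :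
    0 < ∫ x in (0:ℝ)..1, ψ x * ψ x := by
  obtain ⟨x₀, hx₀, hne⟩ := hx0
  have hx0' : 0 < x₀ := lt_of_le_of_ne hx₀.1 (by rintro rfl; exact hne h0)
  have hx1' : x₀ < 1 := lt_of_le_of_ne hx₀.2 (by rintro rfl; exact hne h1)
  have hca : ContinuousAt ψ x₀ := hc.continuousAt (Icc_mem_nhds hx0' hx1')
  set c : ℝ := |ψ x₀| / 2 with hcdef
  have hc0 : 0 < c := by positivity
  have hclt : c < |ψ x₀| := by
    have : 0 < |ψ x₀| := abs_pos.mpr hne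
    linarith
  have hev : ∀ᶠ y in nhds x₀, c < |ψ y| := hca.abs.eventually (eventually_gt_nhds hclt)
  obtain ⟨δ, hδ0, hδ⟩ := Metric.eventually_nhds_iff.mp hev
  set d : ℝ := min (δ/2) (min x₀ (1 - x₀)) with hddef
  have hd0 : 0 < d := by
    apply lt_min (by linarith) (lt_min hx0' (by linarith))
  set a : ℝ := x₀ - d with hadef
  set b : ℝ := x₀ + d with hbdef
  have hda : d ≤ x₀ := le_trans (min_le_right _ _) (min_le_left _ _)
  have hdb : d ≤ 1 - x₀ := le_trans (min_le_right _ _) (min_le_right _ _)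
  have hdd : d ≤ δ/2 := min_le_left _ _
  have haI : a ∈ Icc (0:ℝ) 1 := ⟨by simp [hadef]; linarith, by simp [hadef]; linarith⟩
  have hbI : b ∈ Icc (0:ℝ) 1 := ⟨by simp [hbdef]; linarith, by simp [hbdef]; linarith⟩
  have hsq : ContinuousOn (fun x => ψ x * ψ x) (Icc 0 1) := hc.mul hc
  have i1 := icc_ii hsq h0I haI
  have i2 := icc_ii hsq haI hbI
  have i3 := icc_ii hsq hbI h1I
  have hsplit : (∫ x in (0:ℝ)..1, ψ x * ψ x)
      = (∫ x in (0:ℝ)..a, ψ x * ψ x) + (∫ x in a..b, ψ x * ψ x)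
        + (∫ x in b..(1:ℝ), ψ x * ψ x) := by
    rw [integral_add_adjacent_intervals i1 i2, integral_add_adjacent_intervals (i1.trans i2) i3]
  have hn1 : 0 ≤ ∫ x in (0:ℝ)..a, ψ x * ψ x :=
    integral_nonneg haI.1 (fun x _ => mul_self_nonneg _)
  have hn3 : 0 ≤ ∫ x in b..(1:ℝ), ψ x * ψ x :=
    integral_nonneg hbI.2 (fun x _ => mul_self_nonneg _)
  have hab : a ≤ b := by simp [hadef, hbdef]; linarith
  have hmono : (∫ x in a..b, (fun _ => c * c) x) ≤ ∫ x in a..b, ψ x * ψ x := by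
    apply integral_mono_on hab intervalIntegrable_const i2
    intro y hy
    have hdist : dist y x₀ < δ := by
      rw [Real.dist_eq, abs_lt]
      constructor <;> [skip; skip] <;>
        · simp only [hadef, hbdef] at hy; cases' hy with hy1 hy2; linarith
    have := hδ hdist
    nlinarith [abs_nonneg (ψ y), sq_abs (ψ y)]
  rw [intervalIntegral.integral_const, smul_eq_mul] at hmono
  have : 0 < (b - a) * (c * c) := by
    apply mul_pos _ (mul_pos hc0 hc0)
    simp [hadef, hbdef]; linarith
  linarith

private lemma exists_normalized {q : ℝ → ℝ} {lam : ℝ} (h : IsDirichletEigenvalue q lam) :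
    ∃ f f' : ℝ → ℝ,
      (∀ x ∈ Icc (0:ℝ) 1, HasDerivAt f (f' x) x) ∧
      (∀ x ∈ Icc (0:ℝ) 1, HasDerivAt f' (q x * f x - lam * f x) x) ∧
      f 0 = 0 ∧ f 1 = 0 ∧ (∫ x in (0:ℝ)..1, f x * f x) = 1 := by
  obtain ⟨ψ, ψ', h1, h2, h3, h4, h5⟩ := h
  have hc : ContinuousOn ψ (Icc 0 1) := icc_cont h1
  have hI : 0 < ∫ x in (0:ℝ)..1, ψ x * ψ x := sq_integral_pos hc h3 h4 h5
  set I : ℝ := ∫ x in (0:ℝ)..1, ψ x * ψ x with hIdef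
  set r : ℝ := (Real.sqrt I)⁻¹ with hrdef
  have hsI : 0 < Real.sqrt I := Real.sqrt_pos.mpr hI
  refine ⟨fun x => r * ψ x, fun x => r * ψ' x, ?_, ?_, by simp [h4], by simp [h5], ?_⟩
  · exact fun x hx => (h1 x hx).const_mul r
  · intro x hx
    have := (h2 x hx).const_mul r
    have heq : r * (q x * ψ x - lam * ψ x)
        = q x * (r * ψ x) - lam * (r * ψ x) := by ring
    rwa [heq] at this
  · have : (fun x => (r * ψ x) * (r * ψ x)) = fun x => (r * r) * (ψ x * ψ x) := by
      funext x; ring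
    rw [this, intervalIntegral.integral_const_mul, ← hIdef, hrdef,
      ← Real.sqrt_mul_self hI.le]
    field_simp
    rw [Real.sq_sqrt (Real.sqrt_nonneg _)]

private lemma energy_bound {Q lam : ℝ} {q f f' : ℝ → ℝ}
    (hd1 : ∀ x ∈ Icc (0:ℝ) 1, HasDerivAt f (f' x) x)
    (hd2 : ∀ x ∈ Icc (0:ℝ) 1, HasDerivAt f' (q x * f x - lam * f x) x)
    (hq : ContinuousOn q (Icc 0 1)) (hqQ : ∀ x ∈ Icc (0:ℝ) 1, |q x| ≤ Q)
    (hlam : lam < 0) (hf0 : f 0 = 0) (hf1 : f 1 = 0)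
    (hnorm : (∫ x in (0:ℝ)..1, f x * f x) = 1) :
    (∫ x in (0:ℝ)..1, f' x * f' x) ≤ Q := by
  have hcf : ContinuousOn f (Icc 0 1) := icc_cont hd1
  have hcf' : ContinuousOn f' (Icc 0 1) := icc_cont hd2
  have hg : ContinuousOn (fun x => q x * f x - lam * f x) (Icc 0 1) :=
    (hq.mul hcf).sub (continuousOn_const.mul hcf)
  have hiff : IntervalIntegrable (fun x => f' x * f' x) volume 0 1 :=
    icc_ii (hcf'.mul hcf') h0I h1I
  have hifg : IntervalIntegrable (fun x => f x * (q x * f x - lam * f x)) volume 0 1 :=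
    icc_ii (hcf.mul hg) h0I h1I
  have key : (∫ x in (0:ℝ)..1, (f' x * f' x + f x * (q x * f x - lam * f x))) =
      f 1 * f' 1 - f 0 * f' 0 := by
    refine intervalIntegral.integral_eq_sub_of_hasDerivAt
      (f := fun x => f x * f' x)
      (f' := fun x => f' x * f' x + f x * (q x * f x - lam * f x)) ?_ ?_
    · intro x hx
      rw [uIcc_of_le (zero_le_one' ℝ)] at hx
      exact (hd1 x hx).mul (hd2 x hx)
    · exact (hiff.add hifg).mono_set (by rw [uIcc_of_le (zero_le_one' ℝ)])
  rw [hf0, hf1, integral_add hiff hifg] at key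
  have hswap : (∫ x in (0:ℝ)..1, f x * (q x * f x - lam * f x)) =
      ∫ x in (0:ℝ)..1, (q x - lam) * (f x * f x) :=
    intervalIntegral.integral_congr (fun x _ => by ring)
  rw [hswap] at key
  have hmono : (∫ x in (0:ℝ)..1, (q x - lam) * (f x * f x)) ≥
      ∫ x in (0:ℝ)..1, (-Q) * (f x * f x) := by
    apply integral_mono_on zero_le_one
      (icc_ii (continuousOn_const.mul (hcf.mul hcf)) h0I h1I)
      (icc_ii ((hq.sub continuousOn_const).mul (hcf.mul hcf)) h0I h1I)
    intro x hx
    have h1 := hqQ x hx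
    have h2 := abs_le.mp h1
    show -Q * (f x * f x) ≤ (q x - lam) * (f x * f x)
    nlinarith [mul_self_nonneg (f x)]
  rw [intervalIntegral.integral_const_mul, hnorm] at hmono
  simp only [mul_one] at hmono
  linarith

private lemma modulus {Q lam : ℝ} {q f f' : ℝ → ℝ}
    (hd1 : ∀ x ∈ Icc (0:ℝ) 1, HasDerivAt f (f' x) x)
    (hd2 : ∀ x ∈ Icc (0:ℝ) 1, HasDerivAt f' (q x * f x - lam * f x) x)
    (hq : ContinuousOn q (Icc 0 1)) (hqQ : ∀ x ∈ Icc (0:ℝ) 1, |q x| ≤ Q)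
    (hlam : lam < 0) (hf0 : f 0 = 0) (hf1 : f 1 = 0)
    (hnorm : (∫ x in (0:ℝ)..1, f x * f x) = 1) :
    ∀ ε > (0:ℝ), ∀ y ∈ Icc (0:ℝ) 1, ∀ x ∈ Icc (0:ℝ) 1, y ≤ x →
      |f x - f y| ≤ (ε * Q + (x - y)/ε)/2 := by
  have hE := energy_bound hd1 hd2 hq hqQ hlam hf0 hf1 hnorm
  have hcf' : ContinuousOn f' (Icc 0 1) := icc_cont hd2
  intro ε hε y hy x hx hyx
  have hsub : Icc y x ⊆ Icc (0:ℝ) 1 := Icc_subset_Icc hy.1 hx.2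
  have hftc : f x - f y = ∫ t in y..x, f' t := by
    symm
    apply intervalIntegral.integral_eq_sub_of_hasDerivAt
    · intro t ht
      rw [uIcc_of_le hyx] at ht
      exact hd1 t (hsub ht)
    · exact icc_ii hcf' hy hx
  have habs : |∫ t in y..x, f' t| ≤ ∫ t in y..x, |f' t| :=
    intervalIntegral.abs_integral_le_integral_abs hyx
  have hii2 : IntervalIntegrable (fun t => f' t * f' t) volume y x :=
    icc_ii (hcf'.mul hcf') hy hx
  have hmono2 : (∫ t in y..x, |f' t|) ≤ ∫ t in y..x, (ε * (f' t * f' t) + 1/ε)/2 := by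
    apply integral_mono_on hyx (icc_ii hcf'.abs hy hx)
      (((hii2.const_mul ε).add intervalIntegrable_const).div_const 2)
    intro t _
    have h2 : 2 * ε * |f' t| ≤ ε^2 * (f' t * f' t) + 1 := by
      nlinarith [sq_nonneg (ε * |f' t| - 1), sq_abs (f' t)]
    have h2e : (0:ℝ) < 2 * ε := by linarith
    calc |f' t| = (2 * ε * |f' t|) / (2 * ε) := by field_simp
      _ ≤ (ε^2 * (f' t * f' t) + 1) / (2 * ε) := by
          gcongr
      _ = (ε * (f' t * f' t) + 1/ε) / 2 := by field_simp
  have hcomp : (∫ t in y..x, (ε * (f' t * f' t) + 1/ε)/2)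
      = (ε * (∫ t in y..x, f' t * f' t) + (x - y) * (1/ε))/2 := by
    rw [intervalIntegral.integral_div,
      intervalIntegral.integral_add (hii2.const_mul ε) intervalIntegrable_const,
      intervalIntegral.integral_const_mul, intervalIntegral.integral_const, smul_eq_mul]
  have hsub2 : (∫ t in y..x, f' t * f' t) ≤ Q := by
    have i1 : IntervalIntegrable (fun t => f' t * f' t) volume 0 y :=
      icc_ii (hcf'.mul hcf') h0I hy
    have i3 : IntervalIntegrable (fun t => f' t * f' t) volume x 1 :=
      icc_ii (hcf'.mul hcf') hx h1I
    have hsplit : (∫ t in (0:ℝ)..1, f' t * f' t)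
        = (∫ t in (0:ℝ)..y, f' t * f' t) + (∫ t in y..x, f' t * f' t)
          + (∫ t in x..(1:ℝ), f' t * f' t) := by
      rw [integral_add_adjacent_intervals i1 hii2,
        integral_add_adjacent_intervals (i1.trans hii2) i3]
    have hn1 : 0 ≤ ∫ t in (0:ℝ)..y, f' t * f' t :=
      integral_nonneg hy.1 (fun t _ => mul_self_nonneg _)
    have hn3 : 0 ≤ ∫ t in x..(1:ℝ), f' t * f' t :=
      integral_nonneg hx.2 (fun t _ => mul_self_nonneg _)
    linarith
  rw [hftc]
  calc |∫ t in y..x, f' t| ≤ ∫ t in y..x, |f' t| := habs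
    _ ≤ (ε * (∫ t in y..x, f' t * f' t) + (x - y) * (1/ε))/2 := by
        rw [← hcomp]; exact hmono2
    _ ≤ (ε * Q + (x - y)/ε)/2 := by
        have h13 := mul_le_mul_of_nonneg_left hsub2 hε.le
        have h14 : (x - y)/ε = (x - y) * (1/ε) := by ring
        rw [h14]
        linarith

private lemma eigen_orth {lam mu : ℝ} {q f f' g g' : ℝ → ℝ} (hne : lam ≠ mu)
    (hdf1 : ∀ x ∈ Icc (0:ℝ) 1, HasDerivAt f (f' x) x)
    (hdf2 : ∀ x ∈ Icc (0:ℝ) 1, HasDerivAt f' (q x * f x - lam * f x) x)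
    (hdg1 : ∀ x ∈ Icc (0:ℝ) 1, HasDerivAt g (g' x) x)
    (hdg2 : ∀ x ∈ Icc (0:ℝ) 1, HasDerivAt g' (q x * g x - mu * g x) x)
    (hf0 : f 0 = 0) (hf1 : f 1 = 0) (hg0 : g 0 = 0) (hg1 : g 1 = 0)
    (hq : ContinuousOn q (Icc 0 1)) :
    (∫ x in (0:ℝ)..1, f x * g x) = 0 := by
  have hcf : ContinuousOn f (Icc 0 1) := icc_cont hdf1
  have hcf' : ContinuousOn f' (Icc 0 1) := icc_cont hdf2
  have hcg : ContinuousOn g (Icc 0 1) := icc_cont hdg1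
  have hcg' : ContinuousOn g' (Icc 0 1) := icc_cont hdg2
  have hcD : ContinuousOn (fun x => (q x * f x - lam * f x) * g x + f' x * g' x
      - (f' x * g' x + f x * (q x * g x - mu * g x))) (Icc 0 1) := by
    apply ContinuousOn.sub
    · exact (((hq.mul hcf).sub (continuousOn_const.mul hcf)).mul hcg).add (hcf'.mul hcg')
    · exact (hcf'.mul hcg').add (hcf.mul ((hq.mul hcg).sub (continuousOn_const.mul hcg)))
  have key : (∫ x in (0:ℝ)..1, ((q x * f x - lam * f x) * g x + f' x * g' x
      - (f' x * g' x + f x * (q x * g x - mu * g x)))) =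
      (f' 1 * g 1 - f 1 * g' 1) - (f' 0 * g 0 - f 0 * g' 0) := by
    refine intervalIntegral.integral_eq_sub_of_hasDerivAt
      (f := fun x => f' x * g x - f x * g' x) ?_ ?_
    · intro x hx
      rw [uIcc_of_le (zero_le_one' ℝ)] at hx
      exact ((hdf2 x hx).mul (hdg1 x hx)).sub ((hdf1 x hx).mul (hdg2 x hx))
    · exact (icc_ii hcD h0I h1I).mono_set (by rw [uIcc_of_le (zero_le_one' ℝ)])
  rw [hf0, hf1, hg0, hg1] at key
  simp only [mul_zero, zero_mul, sub_zero, sub_self] at key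
  have hswap : (∫ x in (0:ℝ)..1, ((q x * f x - lam * f x) * g x + f' x * g' x
      - (f' x * g' x + f x * (q x * g x - mu * g x)))) =
      ∫ x in (0:ℝ)..1, (mu - lam) * (f x * g x) :=
    intervalIntegral.integral_congr (fun x _ => by ring)
  rw [hswap, intervalIntegral.integral_const_mul] at key
  have hmu : mu - lam ≠ 0 := sub_ne_zero.mpr (Ne.symm hne)
  exact (mul_eq_zero.mp key).resolve_left hmu

/-- a continuous potential on `[0,1]` has only finitely many negative
Dirichlet eigenvalues. -/
theorem finitely_many_negative_dirichlet_eigenvalues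
    (q : ℝ → ℝ) (hq : ContinuousOn q (Set.Icc 0 1)) :
    {lam : ℝ | lam < 0 ∧ IsDirichletEigenvalue q lam}.Finite := by
  by_contra hfin
  have hinf : {lam : ℝ | lam < 0 ∧ IsDirichletEigenvalue q lam}.Infinite := hfin
  obtain ⟨C, hC⟩ := isCompact_Icc.exists_bound_of_continuousOn hq
  set Q : ℝ := max C 0 with hQdef
  have hQ0 : (0:ℝ) ≤ Q := le_max_right _ _
  have hqQ : ∀ x ∈ Icc (0:ℝ) 1, |q x| ≤ Q := fun x hx => (hC x hx).trans (le_max_left _ _)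
  let e := hinf.natEmbedding
  have hmem : ∀ n : ℕ, ((e n : ℝ) < 0 ∧ IsDirichletEigenvalue q (e n)) := fun n => (e n).2
  have hex := fun n : ℕ => exists_normalized (hmem n).2
  choose f f' hd1 hd2 hf0 hf1 hnorm using hex
  have hcfn : ∀ n, ContinuousOn (f n) (Icc 0 1) := fun n => icc_cont (hd1 n)
  have hmod := fun n : ℕ => modulus (hd1 n) (hd2 n) hq hqQ (hmem n).1 (hf0 n) (hf1 n) (hnorm n)
  have horth : ∀ n m : ℕ, n ≠ m → (∫ x in (0:ℝ)..1, f n x * f m x) = 0 := by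
    intro n m hnm
    apply eigen_orth (lam := (e n : ℝ)) (mu := (e m : ℝ))
      (fun h => hnm (e.injective (Subtype.ext h)))
      (hd1 n) (hd2 n) (hd1 m) (hd2 m) (hf0 n) (hf1 n) (hf0 m) (hf1 m) hq
  -- uniform bound B
  set B : ℝ := (Q + 1)/2 with hBdef
  have hB : ∀ n, ∀ x ∈ Icc (0:ℝ) 1, |f n x| ≤ B := by
    intro n x hx
    have := hmod n 1 one_pos 0 h0I x hx hx.1
    rw [hf0 n, sub_zero] at this
    refine this.trans ?_
    rw [hBdef]
    have := hx.2
    simp only [div_one]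
    linarith
  -- modulus with fixed scale
  set δ : ℝ := 1/(16*Q+16) with hδdef
  have h16 : (0:ℝ) < 16*Q+16 := by linarith
  have h4 : (0:ℝ) < 4*Q+4 := by linarith
  have hδ0 : 0 < δ := by rw [hδdef]; positivity
  have hmod4 : ∀ n, ∀ y ∈ Icc (0:ℝ) 1, ∀ x ∈ Icc (0:ℝ) 1, y ≤ x → x - y ≤ δ →
      |f n x - f n y| ≤ 1/4 := by
    intro n y hy x hx hyx hclose
    have hε0 : (0:ℝ) < 1/(4*Q+4) := by positivity
    have := hmod n (1/(4*Q+4)) hε0 y hy x hx hyx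
    refine this.trans ?_
    have ha : (1/(4*Q+4)) * Q ≤ 1/4 := by
      rw [div_mul_eq_mul_div, div_le_div_iff₀ h4 (by norm_num)]
      linarith
    have hb : (x - y)/(1/(4*Q+4)) ≤ 1/4 := by
      rw [div_div_eq_mul_div, div_one]
      have h1 : (x - y) * (4*Q+4) ≤ δ * (4*Q+4) := by
        apply mul_le_mul_of_nonneg_right hclose h4.le
      have h2 : δ * (4*Q+4) = 1/4 := by
        rw [hδdef]; field_simp; ring
      linarith
    linarith
  -- pigeonhole setup
  set N : ℕ := ⌈1/δ⌉₊ with hNdef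
  set M : ℤ := ⌈4*B⌉ with hMdef
  have hBnn : (0:ℝ) ≤ B := by rw [hBdef]; linarith
  haveI : Finite (Set.Icc (-M) M) := (Set.finite_Icc _ _).to_subtype
  have hgrid : ∀ (j : Fin (N+1)), min ((j:ℝ) * δ) 1 ∈ Icc (0:ℝ) 1 := by
    intro j
    constructor
    · apply le_min (by positivity) zero_le_one
    · exact min_le_right _ _
  have hfloor_mem : ∀ (n : ℕ) (j : Fin (N+1)), ⌊4 * f n (min ((j:ℝ) * δ) 1)⌋ ∈ Set.Icc (-M) M := by
    intro n j
    have hb := hB n _ (hgrid j)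
    have hb' := abs_le.mp hb
    constructor
    · rw [Int.le_floor]
      push_cast
      rw [hMdef]
      have : (4:ℝ) * B ≤ (⌈4*B⌉ : ℝ) := Int.le_ceil _
      push_cast at this ⊢
      nlinarith
    · have h1 : (⌊4 * f n (min ((j:ℝ) * δ) 1)⌋ : ℝ) ≤ 4 * f n (min ((j:ℝ) * δ) 1) :=
        Int.floor_le _
      have h2 : (4:ℝ) * f n (min ((j:ℝ) * δ) 1) ≤ 4 * B := by nlinarith
      have h3 : (4:ℝ) * B ≤ (M:ℝ) := by rw [hMdef]; exact Int.le_ceil _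
      exact_mod_cast h1.trans (h2.trans h3)
  set Φ : ℕ → (Fin (N+1) → Set.Icc (-M) M) :=
    fun n j => ⟨⌊4 * f n (min ((j:ℝ) * δ) 1)⌋, hfloor_mem n j⟩ with hΦdef
  obtain ⟨n, m, hnm, hΦeq⟩ := Finite.exists_ne_map_eq_of_infinite Φ
  -- the two functions are uniformly close
  have hclose : ∀ x ∈ Icc (0:ℝ) 1, |f n x - f m x| ≤ 3/4 := by
    intro x hx
    set j : ℕ := ⌊x/δ⌋₊ with hjdef
    have hxδ : (0:ℝ) ≤ x/δ := div_nonneg hx.1 hδ0.le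
    have hjle : (j:ℝ) ≤ x/δ := Nat.floor_le hxδ
    have hjδ : (j:ℝ) * δ ≤ x := by
      rw [← le_div_iff₀ hδ0]; exact hjle
    have hjlt : x/δ < j + 1 := Nat.lt_floor_add_one _
    have hxj : x - (j:ℝ)*δ ≤ δ := by
      have : x < ((j:ℝ) + 1) * δ := by
        rw [← div_lt_iff₀ hδ0]; exact_mod_cast hjlt
      nlinarith
    have hjN : j < N + 1 := by
      have h1 : x/δ ≤ 1/δ := by
        gcongr
        exact hx.2
      have h2 : j ≤ N := le_trans (Nat.floor_mono h1) (Nat.floor_le_ceil _)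
      omega
    set jf : Fin (N+1) := ⟨j, hjN⟩ with hjfdef
    set t : ℝ := min ((jf:ℝ) * δ) 1 with htdef
    have hjfv : ((jf:ℕ):ℝ) = (j:ℝ) := by rw [hjfdef]
    have ht_eq : t = (j:ℝ) * δ := by
      rw [htdef, hjfv]
      exact min_eq_left (hjδ.trans hx.2)
    have htI : t ∈ Icc (0:ℝ) 1 := hgrid jf
    have htx : t ≤ x := by rw [ht_eq]; exact hjδ
    have htδ : x - t ≤ δ := by rw [ht_eq]; exact hxj
    have hfl : ⌊4 * f n t⌋ = ⌊4 * f m t⌋ := by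
      have := congrFun hΦeq jf
      rw [hΦdef] at this
      exact Subtype.ext_iff.mp this
    have hmid : |f n t - f m t| ≤ 1/4 := by
      have h := Int.abs_sub_lt_one_of_floor_eq_floor hfl
      have : |4 * (f n t - f m t)| < 1 := by
        rw [mul_sub]; exact h
      rw [abs_mul] at this
      simp only [abs_of_pos (by norm_num : (0:ℝ) < 4)] at this
      linarith [abs_nonneg (f n t - f m t)]
    have h1 := hmod4 n t htI x hx htx htδ
    have h2 := hmod4 m t htI x hx htx htδ
    calc |f n x - f m x|
        = |(f n x - f n t) + (f n t - f m t) + (f m t - f m x)| := by ring_nf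
      _ ≤ |f n x - f n t| + |f n t - f m t| + |f m t - f m x| := by
          apply (abs_add_le _ _).trans
          gcongr
          exact abs_add_le _ _
      _ ≤ 1/4 + 1/4 + 1/4 := by
          rw [abs_sub_comm (f m t)] at *
          gcongr
      _ = 3/4 := by norm_num
  -- contradiction via L² separation
  have iin : IntervalIntegrable (fun x => f n x * f n x) volume 0 1 :=
    icc_ii ((hcfn n).mul (hcfn n)) h0I h1I
  have iim : IntervalIntegrable (fun x => f m x * f m x) volume 0 1 :=
    icc_ii ((hcfn m).mul (hcfn m)) h0I h1I
  have iinm : IntervalIntegrable (fun x => f n x * f m x) volume 0 1 :=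
    icc_ii ((hcfn n).mul (hcfn m)) h0I h1I
  have hI2 : (∫ x in (0:ℝ)..1, (f n x - f m x) * (f n x - f m x)) = 2 := by
    have hcongr : (∫ x in (0:ℝ)..1, (f n x - f m x) * (f n x - f m x))
        = ∫ x in (0:ℝ)..1, ((f n x * f n x + f m x * f m x) - 2 * (f n x * f m x)) :=
      intervalIntegral.integral_congr (fun x _ => by ring)
    rw [hcongr, integral_sub (iin.add iim) (iinm.const_mul 2),
      integral_add iin iim, intervalIntegral.integral_const_mul,
      hnorm n, hnorm m, horth n m hnm]
    ring
  have hIle : (∫ x in (0:ℝ)..1, (f n x - f m x) * (f n x - f m x)) ≤ 9/16 := by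
    have : (∫ x in (0:ℝ)..1, (f n x - f m x) * (f n x - f m x))
        ≤ ∫ _x in (0:ℝ)..1, (9/16 : ℝ) := by
      apply integral_mono_on zero_le_one
        (icc_ii (((hcfn n).sub (hcfn m)).mul ((hcfn n).sub (hcfn m))) h0I h1I)
        intervalIntegrable_const
      intro x hx
      have := abs_le.mp (hclose x hx)
      show (f n x - f m x) * (f n x - f m x) ≤ 9/16
      nlinarith
    rw [intervalIntegral.integral_const, smul_eq_mul] at this
    linarith
  linarith
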